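/- The everywhere doubled line D is homogeneous: for any two points p, q ∈ D there is a homeomorphism of D taking p to q. Indeed such a homeomorphism can be obtained as a composition of translations and exchange maps. -/
import Mathlib


/-- A wave: open set downstairs with a finite subset lifted upstairs. -/
def Wave (O F : Set ℝ) : Set (ℝ × Bool) :=
  ((O \ F) ×ˢ ({false} : Set Bool)) ∪ (F ×ˢ ({true} : Set Bool))

/-- The collection of all waves. -/
def Waves : Set (Set (ℝ × Bool)) :=
  {S | ∃ O F : Set ℝ, IsOpen O ∧ F ⊆ O ∧ F.Finite ∧ S = Wave O F}

/-- The topology of the everywhere doubled line D on ℝ × Bool. -/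
def DTop : TopologicalSpace (ℝ × Bool) := TopologicalSpace.generateFrom Waves

/-- The translation by s. -/
def transl (s : ℝ) : ℝ × Bool → ℝ × Bool := fun p => (p.1 + s, p.2)

/-- The exchange map at abscissa s. -/
noncomputable def exch (s : ℝ) : ℝ × Bool → ℝ × Bool := fun p => if p.1 = s then (p.1, !p.2) else p

lemma mem_wave (O F : Set ℝ) (x : ℝ) (b : Bool) :
    (x, b) ∈ Wave O F ↔ (x ∈ O ∧ x ∉ F ∧ b = false) ∨ (x ∈ F ∧ b = true) := by
  constructor
  · rintro (⟨⟨h1, h2⟩, h3⟩ | ⟨h1, h2⟩)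
    · exact Or.inl ⟨h1, h2, h3⟩
    · exact Or.inr ⟨h1, h2⟩
  · rintro (⟨h1, h2, h3⟩ | ⟨h1, h2⟩)
    · exact Or.inl ⟨⟨h1, h2⟩, h3⟩
    · exact Or.inr ⟨h1, h2⟩

lemma transl_preimage (s : ℝ) (O F : Set ℝ) :
    transl s ⁻¹' Wave O F = Wave ((· + s) ⁻¹' O) ((· + s) ⁻¹' F) := by
  ext ⟨x, b⟩
  simp [transl, mem_wave]

lemma exch_preimage (u : ℝ) (O F : Set ℝ) (hF : F ⊆ O) :
    exch u ⁻¹' Wave O F = Wave O ((F \ {u}) ∪ ({u} ∩ (O \ F))) := by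
  ext ⟨x, b⟩
  by_cases hx : x = u
  · subst hx
    have h : x ∈ F → x ∈ O := fun h => hF h
    simp only [Set.mem_preimage, exch, if_pos rfl]
    cases b <;> simp [mem_wave] <;> tauto
  · simp only [Set.mem_preimage, exch, if_neg hx, mem_wave, Set.mem_union, Set.mem_diff,
      Set.mem_inter_iff, Set.mem_singleton_iff]
    tauto

lemma transl_continuous (s : ℝ) : @Continuous _ _ DTop DTop (transl s) := by
  rw [DTop, continuous_generateFrom_iff]
  rintro S ⟨O, F, hO, hFO, hFfin, rfl⟩
  rw [transl_preimage]
  exact TopologicalSpace.isOpen_generateFrom_of_mem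
    ⟨_, _, hO.preimage (continuous_id.add continuous_const),
      fun x hx => hFO hx, hFfin.preimage (add_left_injective s).injOn, rfl⟩

lemma exch_continuous (u : ℝ) : @Continuous _ _ DTop DTop (exch u) := by
  rw [DTop, continuous_generateFrom_iff]
  rintro S ⟨O, F, hO, hFO, hFfin, rfl⟩
  rw [exch_preimage u O F hFO]
  refine TopologicalSpace.isOpen_generateFrom_of_mem ⟨O, _, hO, ?_, ?_, rfl⟩
  · rintro x (⟨hx, -⟩ | ⟨-, hx, -⟩)
    · exact hFO hx
    · exact hx
  · exact ((hFfin.subset Set.diff_subset).union ((Set.finite_singleton u).inter_of_left _))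

lemma transl_isHomeomorph (s : ℝ) :
    @IsHomeomorph (ℝ × Bool) (ℝ × Bool) DTop DTop (transl s) := by
  rw [@isHomeomorph_iff_exists_inverse _ _ DTop DTop]
  refine ⟨transl_continuous s, transl (-s), ?_, ?_, transl_continuous (-s)⟩
  · intro p; simp [transl]
  · intro p; simp [transl]

lemma exch_involutive (u : ℝ) : ∀ p, exch u (exch u p) = p := by
  intro ⟨x, b⟩
  by_cases hx : x = u <;> simp [exch, hx]

lemma exch_isHomeomorph (u : ℝ) :
    @IsHomeomorph (ℝ × Bool) (ℝ × Bool) DTop DTop (exch u) := by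
  rw [@isHomeomorph_iff_exists_inverse _ _ DTop DTop]
  exact ⟨exch_continuous u, exch u, exch_involutive u, exch_involutive u, exch_continuous u⟩

theorem doubledLine_homogeneous :
    ∀ p q : ℝ × Bool, ∃ f : ℝ × Bool → ℝ × Bool,
      @IsHomeomorph (ℝ × Bool) (ℝ × Bool) DTop DTop f ∧ f p = q ∧
      ∃ s : ℝ, f = transl s ∨ ∃ u : ℝ, f = exch u ∘ transl s := by
  rintro ⟨a, i⟩ ⟨b, j⟩
  by_cases hij : i = j
  · refine ⟨transl (b - a), transl_isHomeomorph _, ?_, b - a, Or.inl rfl⟩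
    simp [transl, hij]
  · refine ⟨exch b ∘ transl (b - a),
      @IsHomeomorph.comp _ _ _ DTop DTop DTop _ _ (exch_isHomeomorph b) (transl_isHomeomorph _), ?_, b - a, Or.inr ⟨b, rfl⟩⟩
    have : a + (b - a) = b := by ring
    simp only [Function.comp_apply, transl, exch, this, if_pos rfl]
    cases i <;> cases j <;> simp_all
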